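/- arXiv:1407.4093 — 4 statements merged into one kernel-verified Lean document; each statement's English description precedes it below -/
import Mathlib

section
/- Let φ : ℝ → ℝ be self-equivarying with index ρ ≥ 0 and suppose 1/φ is locally integrable on [0,∞). Then for every s ≥ 0, τ_φ(x + sφ(x)) − τ_φ(x) → τ_η(s) as x → ∞, locally uniformly in s on [0,∞), where τ_φ(x) := ∫₀^x dw/φ(w) and τ_η(s) := ∫₀^s dw/(1 + ρw) (so τ_η(s) = ρ⁻¹ log(1 + ρs) for ρ > 0 and τ_η(s) = s for ρ = 0). In particular, if ρ = 0 then τ_φ(x + sφ(x)) − τ_φ(x) → s locally uniformly. -/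
open Filter Topology MeasureTheory

/-- A function `φ : ℝ → ℝ` is *self-equivarying* with index `ρ`:
`φ` is eventually positive, `φ(x) = O(x)` at infinity, and
`φ(x + t φ(x))/φ(x) → 1 + ρ t` locally uniformly in `t ∈ [0,∞)`. -/
def IsSelfEquivarying (φ : ℝ → ℝ) (ρ : ℝ) : Prop :=
  (∀ᶠ x in atTop, 0 < φ x) ∧
  (φ =O[atTop] fun x => x) ∧
  ∀ T > 0, TendstoUniformlyOn (fun x t => φ (x + t * φ x) / φ x)
    (fun t => 1 + ρ * t) atTop (Set.Icc 0 T)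

/-- The occupation time `τ_φ(x) = ∫₀^x dw/φ(w)`. -/
noncomputable def tauPhi (φ : ℝ → ℝ) (x : ℝ) : ℝ :=
  ∫ w in (0:ℝ)..x, 1 / φ w

/-- For `φ` self-equivarying with index `ρ ≥ 0` and `1/φ` locally integrable on `[0,∞)`,
`τ_φ(x + s φ(x)) − τ_φ(x) → τ_η(s) = ∫₀^s dw/(1 + ρ w)` locally uniformly in `s ∈ [0,∞)`;
in particular for `ρ = 0` the limit is `s` itself. -/
theorem beurling_occupation_time_convergence (φ : ℝ → ℝ) (ρ : ℝ) (hρ : 0 ≤ ρ)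
    (hφ : IsSelfEquivarying φ ρ)
    (hloc : LocallyIntegrableOn (fun w => 1 / φ w) (Set.Ici 0)) :
    (∀ S > 0, TendstoUniformlyOn
      (fun x s => tauPhi φ (x + s * φ x) - tauPhi φ x)
      (fun s => ∫ w in (0:ℝ)..s, 1 / (1 + ρ * w)) atTop (Set.Icc 0 S)) ∧
    (ρ = 0 → ∀ S > 0, TendstoUniformlyOn
      (fun x s => tauPhi φ (x + s * φ x) - tauPhi φ x)
      (fun s => s) atTop (Set.Icc 0 S)) := by
  obtain ⟨hpos, hO, hunif⟩ := hφ
  have hint : ∀ a b : ℝ, 0 ≤ a → a ≤ b →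
      IntervalIntegrable (fun w => 1 / φ w) volume a b := by
    intro a b ha hab
    have huIcc : Set.uIcc a b = Set.Icc a b := Set.uIcc_of_le hab
    rw [intervalIntegrable_iff', huIcc]
    exact hloc.integrableOn_compact_subset (fun y hy => ha.trans hy.1) isCompact_Icc
  have main : ∀ S > 0, TendstoUniformlyOn
      (fun x s => tauPhi φ (x + s * φ x) - tauPhi φ x)
      (fun s => ∫ w in (0:ℝ)..s, 1 / (1 + ρ * w)) atTop (Set.Icc 0 S) := by
    intro S hS
    rw [Metric.tendstoUniformlyOn_iff]
    intro ε hε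
    set δ : ℝ := min (1/2) (ε / (4 * S)) with hδdef
    have hδpos : 0 < δ := lt_min (by norm_num) (by positivity)
    have hδhalf : δ ≤ 1/2 := min_le_left _ _
    have hδε : 2 * δ * S < ε := by
      have h1 : δ ≤ ε / (4 * S) := min_le_right _ _
      have h2 : 2 * δ * S ≤ 2 * (ε / (4 * S)) * S := by nlinarith
      have h3 : 2 * (ε / (4 * S)) * S = ε / 2 := by field_simp; ring
      linarith
    have h1 := hunif S hS
    rw [Metric.tendstoUniformlyOn_iff] at h1
    filter_upwards [h1 δ hδpos, hpos, eventually_ge_atTop (0:ℝ)] with x hx hφx hx0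
    intro s hs
    obtain ⟨hs0, hsS⟩ := hs
    have hsφ : 0 ≤ s * φ x := mul_nonneg hs0 hφx.le
    have hle : x ≤ x + s * φ x := by linarith
    -- integrability pieces
    have hi1 : IntervalIntegrable (fun w => 1 / φ w) volume 0 x := hint 0 x le_rfl hx0
    have hi2 : IntervalIntegrable (fun w => 1 / φ w) volume 0 (x + s * φ x) :=
      hint 0 (x + s * φ x) le_rfl (hx0.trans hle)
    have hi3 : IntervalIntegrable (fun w => 1 / φ w) volume x (x + s * φ x) :=
      hint x (x + s * φ x) hx0 hle
    -- step A: difference of tauPhi equals integral over [x, x + s φ x]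
    have stepA : tauPhi φ (x + s * φ x) - tauPhi φ x
        = ∫ w in x..(x + s * φ x), 1 / φ w := by
      rw [tauPhi, tauPhi]
      exact intervalIntegral.integral_interval_sub_left hi2 hi1
    -- step B: change of variables
    have stepB : (∫ w in x..(x + s * φ x), 1 / φ w)
        = ∫ t in (0:ℝ)..s, φ x * (1 / φ (x + t * φ x)) := by
      have e1 := intervalIntegral.smul_integral_comp_add_mul (a := 0) (b := s)
        (fun w => 1 / φ w) (φ x) x
      rw [mul_zero, add_zero] at e1
      simp only [show ∀ t : ℝ, x + φ x * t = x + t * φ x from fun t => by ring] at e1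
      rw [← e1, smul_eq_mul, ← intervalIntegral.integral_const_mul]
    -- integrability of the substituted function
    have hg0 : IntervalIntegrable (fun u => 1 / φ (x + u)) volume (x - x)
        (x + s * φ x - x) := hi3.comp_add_left x
    have hg1 : IntervalIntegrable (fun u => 1 / φ (x + u)) volume 0 (s * φ x) := by
      simpa using hg0
    have hg2 : IntervalIntegrable (fun t => 1 / φ (x + φ x * t)) volume
        (0 / φ x) ((s * φ x) / φ x) := hg1.comp_mul_left (c := φ x)
    have hg3 : IntervalIntegrable (fun t => φ x * (1 / φ (x + t * φ x))) volume 0 s := by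
      have h0 : (0 : ℝ) / φ x = 0 := zero_div _
      have hsd : (s * φ x) / φ x = s := mul_div_cancel_right₀ s hφx.ne'
      rw [h0, hsd] at hg2
      have := hg2.const_mul (φ x)
      simpa [mul_comm] using this
    -- integrability of the limit integrand
    have hh : IntervalIntegrable (fun t => 1 / (1 + ρ * t)) volume 0 s := by
      apply ContinuousOn.intervalIntegrable
      apply ContinuousOn.div continuousOn_const
      · exact (continuous_const.add (continuous_const.mul continuous_id)).continuousOn
      · intro t ht
        rw [Set.uIcc_of_le hs0] at ht
        have : 0 ≤ ρ * t := mul_nonneg hρ ht.1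
        positivity
    -- pointwise bound on the integrand difference
    have bound : ∀ t ∈ Set.uIoc (0:ℝ) s,
        ‖1 / (1 + ρ * t) - φ x * (1 / φ (x + t * φ x))‖ ≤ 2 * δ := by
      intro t ht
      rw [Set.uIoc_of_le hs0] at ht
      have ht0 : 0 ≤ t := ht.1.le
      have htS : t ≤ S := ht.2.trans hsS
      have hdist := hx t ⟨ht0, htS⟩
      rw [Real.dist_eq] at hdist
      set r : ℝ := φ (x + t * φ x) / φ x with hr
      have h1t : (1:ℝ) ≤ 1 + ρ * t := by nlinarith
      have hrlb : (1:ℝ)/2 ≤ r := by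
        have : |1 + ρ * t - r| < δ := hdist
        have := abs_lt.mp this
        linarith
      have hrpos : 0 < r := by linarith
      have hφt : 0 < φ (x + t * φ x) := by
        have : r * φ x = φ (x + t * φ x) := div_mul_cancel₀ _ hφx.ne'
        nlinarith
      have hinv : φ x * (1 / φ (x + t * φ x)) = 1 / r := by
        rw [hr, one_div_div, mul_one_div]
      rw [hinv]
      have h1tpos : (0:ℝ) < 1 + ρ * t := by linarith
      have heq : 1 / (1 + ρ * t) - 1 / r = (r - (1 + ρ * t)) / ((1 + ρ * t) * r) := by
        field_simp
      rw [Real.norm_eq_abs, heq, abs_div]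
      have hnum : |r - (1 + ρ * t)| ≤ δ := by
        rw [abs_sub_comm]; exact hdist.le
      have hden : (1:ℝ)/2 ≤ |(1 + ρ * t) * r| := by
        rw [abs_of_pos (by positivity)]
        nlinarith
      calc |r - (1 + ρ * t)| / |(1 + ρ * t) * r| ≤ δ / (1/2) :=
            div_le_div₀ (le_of_lt hδpos) hnum (by norm_num) hden
        _ = 2 * δ := by ring
    -- put everything together
    have key : dist (∫ w in (0:ℝ)..s, 1 / (1 + ρ * w))
        (tauPhi φ (x + s * φ x) - tauPhi φ x) ≤ 2 * δ * s := by
      rw [stepA, stepB, Real.dist_eq, ← intervalIntegral.integral_sub hh hg3]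
      have := intervalIntegral.norm_integral_le_of_norm_le_const bound
      rw [Real.norm_eq_abs] at this
      calc |∫ t in (0:ℝ)..s, (1 / (1 + ρ * t) - φ x * (1 / φ (x + t * φ x)))|
          ≤ 2 * δ * |s - 0| := this
        _ = 2 * δ * s := by rw [sub_zero, abs_of_nonneg hs0]
    have hmono : 2 * δ * s ≤ 2 * δ * S := by nlinarith
    linarith [key]
  refine ⟨main, fun h0 S hS => ?_⟩
  have := main S hS
  simpa [h0] using this
end

section
/- Let ρ > 0, let g : [0,∞) → ℝ be positive with g(y + t)/g(y) → e^{ρt} as y → ∞ for every t ≥ 0, and let V : [0,∞) → ℝ be such that for every s ≥ 0 the limit K_V(s) := lim_{y→∞} (V(y + s) − V(y))/g(y) exists and is finite. Then K_V satisfies the Goldie functional equation K_V(s + t) = K_V(s)·e^{ρt} + K_V(t) for all s, t ≥ 0, and consequently there is c ∈ ℝ with K_V(s) = c·H_ρ(s) = c·(e^{ρs} − 1)/ρ for all s ≥ 0. -/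
open Filter Topology

/-- If `g > 0` on `[0,∞)` is additively regularly varying with index `ρ > 0`
(`g(y+t)/g(y) → e^{ρt}` for `t ≥ 0`) and the limits
`K_V(s) = lim_{y→∞} (V(y+s) − V(y))/g(y)` exist for all `s ≥ 0`, then `K_V`
satisfies the Goldie functional equation `K_V(s+t) = K_V(s) e^{ρt} + K_V(t)` on `[0,∞)`,
and hence `K_V(s) = c (e^{ρs} − 1)/ρ` for some constant `c`. -/
theorem goldie_equation_for_moving_average (ρ : ℝ) (hρ : 0 < ρ)
    (g : ℝ → ℝ) (hgpos : ∀ y ≥ (0:ℝ), 0 < g y)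
    (hg : ∀ t ≥ (0:ℝ), Tendsto (fun y => g (y + t) / g y) atTop (nhds (Real.exp (ρ * t))))
    (V : ℝ → ℝ) (K : ℝ → ℝ)
    (hK : ∀ s ≥ (0:ℝ), Tendsto (fun y => (V (y + s) - V y) / g y) atTop (nhds (K s))) :
    (∀ s ≥ (0:ℝ), ∀ t ≥ (0:ℝ), K (s + t) = K s * Real.exp (ρ * t) + K t) ∧
    (∃ c : ℝ, ∀ s ≥ (0:ℝ), K s = c * ((Real.exp (ρ * s) - 1) / ρ)) := by
  have key : ∀ s ≥ (0:ℝ), ∀ t ≥ (0:ℝ), K (s + t) = K s * Real.exp (ρ * t) + K t := by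
    intro s hs t ht
    have h1 : Tendsto (fun y => (V (y + t + s) - V (y + t)) / g (y + t)) atTop (nhds (K s)) :=
      (hK s hs).comp (tendsto_atTop_add_const_right atTop t tendsto_id)
    have h2 : Tendsto (fun y => (V (y + (s + t)) - V y) / g y) atTop
        (nhds (K s * Real.exp (ρ * t) + K t)) := by
      have h3 := (h1.mul (hg t ht)).add (hK t ht)
      apply h3.congr'
      filter_upwards [eventually_ge_atTop (0:ℝ)] with y hy
      have hgy := (hgpos y hy).ne'
      have hgyt := (hgpos (y + t) (by linarith)).ne'
      have hyy : y + (s + t) = y + t + s := by ring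
      rw [hyy]
      field_simp
      ring
    exact tendsto_nhds_unique (hK (s + t) (by linarith)) h2
  refine ⟨key, ρ * K 1 / (Real.exp ρ - 1), fun s hs => ?_⟩
  have hexp : Real.exp ρ - 1 > 0 := by
    nlinarith [Real.add_one_lt_exp hρ.ne']
  have e1 := key s hs 1 zero_le_one
  have e2 := key 1 zero_le_one s hs
  rw [add_comm] at e2
  rw [e1, mul_one] at e2
  have : K s * (Real.exp ρ - 1) = K 1 * (Real.exp (ρ * s) - 1) := by linarith [e2]
  field_simp
  nlinarith [this]
end

section
/- Let φ : ℝ → ℝ be self-equivarying with index ρ > 0 and h : ℝ → ℝ. Suppose A_u is dense in G₊^ρ = (−1/ρ, ∞) and H†(t) = K(t) for every t ∈ A_u (so that H† restricted to A_u is a homomorphism from (A_u, ∘_ρ) to (ℝ, +)). Then A_u = G₊^ρ and there is c ∈ ℝ such that H†(t) = c·log(1 + ρt) for all t > −1/ρ. -/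
open Filter Topology

/-- `Δ_s^φ h(x) = h(x + sφ(x)) − h(x)` converges to the finite limit `L`
locally uniformly near `t`. -/
def ConvNear (φ h : ℝ → ℝ) (t L : ℝ) : Prop :=
  ∀ ε > 0, ∃ δ > 0, ∃ X : ℝ, ∀ x > X, ∀ s : ℝ, |s - t| < δ →
    |(h (x + s * φ x) - h x) - L| < ε

/-- `A_u`: the set of `t > ρ*` at which `Δ_t^φ h` converges to a finite limit
locally uniformly near `t`. -/
def Au (φ h : ℝ → ℝ) (ρ : ℝ) : Set ℝ :=
  {t | 0 < 1 + ρ * t ∧ ∃ L : ℝ, ConvNear φ h t L}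

/-- `H†(t) = lim_{δ↓0} limsup_{x→∞} sup { h(x + sφ(x)) − h(x) : s ∈ [t, t+δ) }`,
valued in `EReal`. -/
noncomputable def Hdag (φ h : ℝ → ℝ) (t : ℝ) : EReal :=
  ⨅ δ ∈ Set.Ioi (0:ℝ),
    Filter.limsup (fun x => ⨆ s ∈ Set.Ico t (t + δ),
      ((h (x + s * φ x) - h x : ℝ) : EReal)) Filter.atTop

lemma convNear_unique {φ h : ℝ → ℝ} {t L L' : ℝ}
    (h1 : ConvNear φ h t L) (h2 : ConvNear φ h t L') : L = L' := by
  by_contra hne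
  have hε : 0 < |L - L'| / 2 := by
    have : L - L' ≠ 0 := sub_ne_zero.mpr hne
    have := abs_pos.mpr this
    linarith
  obtain ⟨δ1, hδ1, X1, hX1⟩ := h1 _ hε
  obtain ⟨δ2, hδ2, X2, hX2⟩ := h2 _ hε
  set x := max X1 X2 + 1 with hx
  have hx1 : x > X1 := lt_of_le_of_lt (le_max_left _ _) (lt_add_one _)
  have hx2 : x > X2 := lt_of_le_of_lt (le_max_right _ _) (lt_add_one _)
  have e1 := hX1 x hx1 t (by simpa using hδ1)
  have e2 := hX2 x hx2 t (by simpa using hδ2)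
  have : |L - L'| ≤ |(h (x + t * φ x) - h x) - L'| + |(h (x + t * φ x) - h x) - L| := by
    have : L - L' = ((h (x + t * φ x) - h x) - L') - ((h (x + t * φ x) - h x) - L) := by ring
    rw [this]
    exact abs_sub _ _
  linarith

set_option maxHeartbeats 1000000 in
/-- Key combination lemma with radius uniform in `u ∈ (0,1]`. -/
lemma combo {φ : ℝ → ℝ} {ρ : ℝ} (hρ : 0 < ρ) (hφ : IsSelfEquivarying φ ρ)
    {h : ℝ → ℝ} {v Kv : ℝ} (hv : ConvNear φ h v Kv) :
    ∀ ε > 0, ∃ δ, 0 < δ ∧ ∀ u Ku : ℝ, 0 < u → u ≤ 1 → ConvNear φ h u Ku →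
      ∃ X : ℝ, ∀ x > X, ∀ s : ℝ, |s - (u + v * (1 + ρ * u))| < δ →
        |(h (x + s * φ x) - h x) - (Ku + Kv)| < ε := by
  intro ε hε
  obtain ⟨δv, hδv, Xv, hXv⟩ := hv (ε/2) (by linarith)
  set η : ℝ := min (1/2) (δv / (8 * (|v| + 1))) with hη_def
  have hη0 : 0 < η := lt_min (by norm_num) (by positivity)
  have hη2 : η ≤ 1/2 := min_le_left _ _
  have hηv : |v| * η ≤ δv / 8 := by
    have h1 : η ≤ δv / (8 * (|v| + 1)) := min_le_right _ _
    have h2 : |v| * η ≤ |v| * (δv / (8 * (|v| + 1))) :=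
      mul_le_mul_of_nonneg_left h1 (abs_nonneg v)
    have h3 : |v| * (δv / (8 * (|v| + 1))) ≤ δv / 8 := by
      rw [mul_div_assoc']
      rw [div_le_div_iff₀ (by positivity) (by norm_num)]
      nlinarith [abs_nonneg v, hδv.le]
    linarith
  refine ⟨δv / 8, by linarith, ?_⟩
  intro u Ku hu0 hu1 hKu
  obtain ⟨δu, hδu, Xu, hXu⟩ := hKu (ε/2) (by linarith)
  obtain ⟨X0, hX0⟩ := eventually_atTop.mp hφ.1
  have huc := (Metric.tendstoUniformlyOn_iff.mp (hφ.2.2 1 one_pos)) η hη0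
  obtain ⟨X1, hX1⟩ := eventually_atTop.mp huc
  refine ⟨max (max X0 X1) (max Xu Xv), ?_⟩
  intro x hx s hs
  have hxX0 : x ≥ X0 := le_of_lt (lt_of_le_of_lt (le_trans (le_max_left _ _) (le_max_left _ _)) hx)
  have hxX1 : x ≥ X1 := le_of_lt (lt_of_le_of_lt (le_trans (le_max_right _ _) (le_max_left _ _)) hx)
  have hxXu : x > Xu := lt_of_le_of_lt (le_trans (le_max_left _ _) (le_max_right _ _)) hx
  have hxXv : x > Xv := lt_of_le_of_lt (le_trans (le_max_right _ _) (le_max_right _ _)) hx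
  have hφx : 0 < φ x := hX0 x hxX0
  have hψ0 := hX1 x hxX1 u ⟨le_of_lt hu0, hu1⟩
  set x' := x + u * φ x with hx'def
  set ψ := φ x' / φ x with hψdef
  have hdist : |(1 + ρ * u) - ψ| < η := by
    simpa [Real.dist_eq, hψdef, hx'def] using hψ0
  have hρu : 0 < ρ * u := mul_pos hρ hu0
  have hψlb : 1/2 < ψ := by
    have := (abs_lt.mp hdist).2
    linarith
  have hφx' : 0 < φ x' := by
    have hψφ : ψ * φ x = φ x' := div_mul_cancel₀ _ (ne_of_gt hφx)
    nlinarith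
  set w := (s - u) / ψ with hwdef
  have hwφ : w * φ x' = (s - u) * φ x := by
    rw [hwdef, hψdef]
    field_simp
  have hxw : x + s * φ x = x' + w * φ x' := by
    rw [hwφ, hx'def]; ring
  have hwv : |w - v| < δv := by
    have hnum : (w - v) * ψ = (s - (u + v * (1 + ρ * u))) + v * ((1 + ρ * u) - ψ) := by
      rw [hwdef]
      field_simp
      ring
    have habs : |w - v| * ψ = |(s - (u + v * (1 + ρ * u))) + v * ((1 + ρ * u) - ψ)| := by
      rw [← hnum, abs_mul, abs_of_pos (by linarith : (0:ℝ) < ψ)]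
    have hbound : |(s - (u + v * (1 + ρ * u))) + v * ((1 + ρ * u) - ψ)| < δv / 4 := by
      have b2 : |v| * |(1 + ρ * u) - ψ| ≤ δv / 8 :=
        le_trans (mul_le_mul_of_nonneg_left hdist.le (abs_nonneg v)) hηv
      calc |(s - (u + v * (1 + ρ * u))) + v * ((1 + ρ * u) - ψ)|
          ≤ |s - (u + v * (1 + ρ * u))| + |v * ((1 + ρ * u) - ψ)| := abs_add_le _ _
        _ = |s - (u + v * (1 + ρ * u))| + |v| * |(1 + ρ * u) - ψ| := by rw [abs_mul]
        _ < δv / 8 + δv / 8 := add_lt_add_of_lt_of_le hs b2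
        _ = δv / 4 := by ring
    by_contra hc
    push_neg at hc
    nlinarith [abs_nonneg (w - v)]
  have hx'Xv : x' > Xv := by
    have : x < x' := by
      rw [hx'def]
      nlinarith
    linarith
  have e1 := hXv x' hx'Xv w hwv
  rw [← hxw] at e1
  have e2 := hXu x hxXu u (by simpa using hδu)
  have key : (h (x + s * φ x) - h x) - (Ku + Kv)
      = ((h (x + s * φ x) - h x') - Kv) + ((h (x + u * φ x) - h x) - Ku) := by
    rw [hx'def]; ring
  rw [key]
  calc |((h (x + s * φ x) - h x') - Kv) + ((h (x + u * φ x) - h x) - Ku)|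
      ≤ |(h (x + s * φ x) - h x') - Kv| + |(h (x + u * φ x) - h x) - Ku| := abs_add_le _ _
    _ < ε/2 + ε/2 := add_lt_add e1 e2
    _ = ε := by ring

/-- `K` is continuous at points of `Au` along `Au`. -/
lemma K_cont {φ h : ℝ → ℝ} {ρ : ℝ} {K : ℝ → ℝ}
    (hK : ∀ t ∈ Au φ h ρ, ConvNear φ h t (K t)) :
    ∀ t ∈ Au φ h ρ, ∀ ε > 0, ∃ δ > 0, ∀ t' ∈ Au φ h ρ, |t' - t| < δ →
      |K t' - K t| < ε := by
  intro t ht ε hε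
  obtain ⟨δ, hδ, X, hX⟩ := hK t ht (ε/3) (by linarith)
  refine ⟨δ, hδ, ?_⟩
  intro t' ht' hlt
  obtain ⟨δ', hδ', X', hX'⟩ := hK t' ht' (ε/3) (by linarith)
  set x := max X X' + 1 with hx
  have hx1 : x > X := lt_of_le_of_lt (le_max_left _ _) (lt_add_one _)
  have hx2 : x > X' := lt_of_le_of_lt (le_max_right _ _) (lt_add_one _)
  have e1 := hX x hx1 t' hlt
  have e2 := hX' x hx2 t' (by simpa using hδ')
  have : |K t' - K t| ≤ |(h (x + t' * φ x) - h x) - K t| + |(h (x + t' * φ x) - h x) - K t'| := by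
    have hr : K t' - K t = ((h (x + t' * φ x) - h x) - K t) - ((h (x + t' * φ x) - h x) - K t') := by
      ring
    rw [hr]
    exact abs_sub _ _
  linarith

lemma au_subset {φ h : ℝ → ℝ} {ρ : ℝ} (hρ : 0 < ρ) :
    Au φ h ρ ⊆ Set.Ioi (-1 / ρ) := by
  intro t ht
  have h1 : 0 < 1 + ρ * t := ht.1
  have : -1 / ρ < t := by
    rw [div_lt_iff₀ hρ]
    nlinarith
  exact this

lemma dense_pick {φ h : ℝ → ℝ} {ρ : ℝ} (hρ : 0 < ρ)
    (hdense : Set.Ioi (-1 / ρ) ⊆ closure (Au φ h ρ))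
    {a b : ℝ} (hab : a < b) (ha : -1 / ρ ≤ a) :
    ∃ v ∈ Au φ h ρ, a < v ∧ v < b := by
  set p := (a + b) / 2 with hp
  have hpI : p ∈ Set.Ioi (-1 / ρ) := by
    simp only [Set.mem_Ioi]
    have : a < p := by rw [hp]; linarith
    linarith
  have hpc := hdense hpI
  have hnb : Set.Ioo a b ∈ 𝓝 p := by
    apply Ioo_mem_nhds <;> · rw [hp]; linarith
  obtain ⟨v, hv1, hv2⟩ := mem_closure_iff_nhds.mp hpc _ hnb
  exact ⟨v, hv2, hv1.1, hv1.2⟩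

set_option maxHeartbeats 1000000 in
lemma stepB {φ h : ℝ → ℝ} {ρ : ℝ} {K : ℝ → ℝ} (hρ : 0 < ρ)
    (hφ : IsSelfEquivarying φ ρ)
    (hK : ∀ t ∈ Au φ h ρ, ConvNear φ h t (K t))
    (hdense : Set.Ioi (-1 / ρ) ⊆ closure (Au φ h ρ)) :
    Au φ h ρ = Set.Ioi (-1 / ρ) := by
  apply Set.Subset.antisymm (au_subset hρ)
  intro t ht
  simp only [Set.mem_Ioi] at ht
  have hρt : -1 < ρ * t := by
    rw [div_lt_iff₀ hρ] at ht
    nlinarith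
  -- pick v ∈ Au ∩ (max(-1/ρ, (t-1)/(1+ρ)), t)
  set m := max (-1 / ρ) ((t - 1) / (1 + ρ)) with hm
  have hmt : m < t := by
    apply max_lt ht
    rw [div_lt_iff₀ (by linarith : (0:ℝ) < 1 + ρ)]
    nlinarith
  obtain ⟨v, hvAu, hv1, hv2⟩ := dense_pick hρ hdense hmt (le_max_left _ _)
  have hv1' : (t - 1) / (1 + ρ) < v := lt_of_le_of_lt (le_max_right _ _) hv1
  have hvρ : -1 / ρ < v := lt_of_le_of_lt (le_max_left _ _) hv1
  have h1v : 0 < 1 + ρ * v := by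
    rw [div_lt_iff₀ hρ] at hvρ
    nlinarith
  set u₀ := (t - v) / (1 + ρ * v) with hu₀
  have hu₀0 : 0 < u₀ := div_pos (by linarith) h1v
  have hu₀1 : u₀ < 1 := by
    rw [hu₀, div_lt_one h1v]
    rw [div_lt_iff₀ (by linarith : (0:ℝ) < 1 + ρ)] at hv1'
    nlinarith
  have htv : t = u₀ + v * (1 + ρ * u₀) := by
    have hm : u₀ * (1 + ρ * v) = t - v := by rw [hu₀]; exact div_mul_cancel₀ _ h1v.ne'
    linear_combination -hm
  -- the uniform-radius combination deltas
  have hd : ∀ n : ℕ, ∃ δ, 0 < δ ∧ ∀ u Ku : ℝ, 0 < u → u ≤ 1 → ConvNear φ h u Ku →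
      ∃ X : ℝ, ∀ x > X, ∀ s : ℝ, |s - (u + v * (1 + ρ * u))| < δ →
        |(h (x + s * φ x) - h x) - (Ku + K v)| < 1 / (n + 1) := by
    intro n
    exact combo hρ hφ (hK v hvAu) (1 / (n + 1)) (by positivity)
  choose D hD0 hDspec using hd
  -- pick u n ∈ Au near u₀
  have hu : ∀ n : ℕ, ∃ uu ∈ Au φ h ρ,
      u₀ - min (min u₀ (1 - u₀)) (D n / (2 * (1 + ρ * v))) < uu ∧
      uu < u₀ + min (min u₀ (1 - u₀)) (D n / (2 * (1 + ρ * v))) := by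
    intro n
    have hr0 : 0 < min (min u₀ (1 - u₀)) (D n / (2 * (1 + ρ * v))) := by
      exact lt_min (lt_min hu₀0 (by linarith)) (div_pos (hD0 n) (by linarith))
    apply dense_pick hρ hdense (by linarith)
    have : -1 / ρ < 0 := by rw [div_lt_iff₀ hρ]; nlinarith
    have hle : min (min u₀ (1 - u₀)) (D n / (2 * (1 + ρ * v))) ≤ u₀ :=
      le_trans (min_le_left _ _) (min_le_left _ _)
    linarith
  choose U hUAu hUlo hUhi using hu
  have hU0 : ∀ n, 0 < U n := by
    intro n
    have := hUlo n
    have hle : min (min u₀ (1 - u₀)) (D n / (2 * (1 + ρ * v))) ≤ u₀ :=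
      le_trans (min_le_left _ _) (min_le_left _ _)
    linarith
  have hU1 : ∀ n, U n ≤ 1 := by
    intro n
    have := hUhi n
    have hle : min (min u₀ (1 - u₀)) (D n / (2 * (1 + ρ * v))) ≤ 1 - u₀ :=
      le_trans (min_le_left _ _) (min_le_right _ _)
    linarith
  have hUnear : ∀ n, |t - (U n + v * (1 + ρ * U n))| < D n / 2 := by
    intro n
    have hle : min (min u₀ (1 - u₀)) (D n / (2 * (1 + ρ * v))) ≤ D n / (2 * (1 + ρ * v)) :=
      min_le_right _ _
    have h1 : |U n - u₀| < D n / (2 * (1 + ρ * v)) := by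
      rw [abs_lt]
      constructor
      · have := hUlo n; linarith
      · have := hUhi n; linarith
    have h2 : t - (U n + v * (1 + ρ * U n)) = (u₀ - U n) * (1 + ρ * v) := by
      rw [htv]; ring
    rw [h2, abs_mul, abs_of_pos h1v, abs_sub_comm]
    have hne : (1 + ρ * v) ≠ 0 := ne_of_gt h1v
    calc |U n - u₀| * (1 + ρ * v) < D n / (2 * (1 + ρ * v)) * (1 + ρ * v) :=
          mul_lt_mul_of_pos_right h1 h1v
      _ = D n / 2 := by field_simp
  -- X for each n
  have hXn : ∀ n : ℕ, ∃ X : ℝ, ∀ x > X, ∀ s : ℝ, |s - (U n + v * (1 + ρ * U n))| < D n →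
      |(h (x + s * φ x) - h x) - (K (U n) + K v)| < 1 / (n + 1) :=
    fun n => hDspec n (U n) (K (U n)) (hU0 n) (hU1 n) (hK (U n) (hUAu n))
  choose XX hXX using hXn
  -- Cauchy estimate
  have hcau : ∀ m n : ℕ, |K (U m) - K (U n)| < 1 / (m + 1) + 1 / (n + 1) := by
    intro m n
    set x := max (XX m) (XX n) + 1 with hx
    have hx1 : x > XX m := lt_of_le_of_lt (le_max_left _ _) (lt_add_one _)
    have hx2 : x > XX n := lt_of_le_of_lt (le_max_right _ _) (lt_add_one _)
    have e1 : |(h (x + t * φ x) - h x) - (K (U m) + K v)| < 1 / (m + 1) := by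
      apply hXX m x hx1 t
      calc |t - (U m + v * (1 + ρ * U m))| < D m / 2 := hUnear m
        _ < D m := by linarith [hD0 m]
    have e2 : |(h (x + t * φ x) - h x) - (K (U n) + K v)| < 1 / (n + 1) := by
      apply hXX n x hx2 t
      calc |t - (U n + v * (1 + ρ * U n))| < D n / 2 := hUnear n
        _ < D n := by linarith [hD0 n]
    have : |K (U m) - K (U n)| ≤ |(h (x + t * φ x) - h x) - (K (U n) + K v)| +
        |(h (x + t * φ x) - h x) - (K (U m) + K v)| := by
      have hr : K (U m) - K (U n) = ((h (x + t * φ x) - h x) - (K (U n) + K v))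
          - ((h (x + t * φ x) - h x) - (K (U m) + K v)) := by ring
      rw [hr]
      exact abs_sub _ _
    linarith
  have hCS : CauchySeq (fun n => K (U n)) := by
    rw [Metric.cauchySeq_iff]
    intro ε hε
    obtain ⟨N, hN⟩ := exists_nat_one_div_lt (half_pos hε)
    refine ⟨N, ?_⟩
    intro m hm n hn
    rw [Real.dist_eq]
    have h1 : 1 / ((m:ℝ) + 1) ≤ 1 / ((N:ℝ) + 1) := by
      apply one_div_le_one_div_of_le (by positivity)
      exact_mod_cast Nat.succ_le_succ hm
    have h2 : 1 / ((n:ℝ) + 1) ≤ 1 / ((N:ℝ) + 1) := by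
      apply one_div_le_one_div_of_le (by positivity)
      exact_mod_cast Nat.succ_le_succ hn
    calc |K (U m) - K (U n)| < 1 / (m + 1) + 1 / (n + 1) := hcau m n
      _ ≤ 1 / ((N:ℝ) + 1) + 1 / ((N:ℝ) + 1) := add_le_add h1 h2
      _ < ε / 2 + ε / 2 := add_lt_add hN hN
      _ = ε := by ring
  obtain ⟨κ, hκ⟩ := cauchySeq_tendsto_of_complete hCS
  -- conclude t ∈ Au
  refine ⟨by nlinarith, K v + κ, ?_⟩
  intro ε hε
  obtain ⟨N1, hN1⟩ := exists_nat_one_div_lt (by linarith : (0:ℝ) < ε / 3)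
  obtain ⟨N2, hN2⟩ := Metric.tendsto_atTop.mp hκ (ε / 3) (by linarith)
  set n := max N1 N2 with hn
  have hn1 : 1 / ((n:ℝ) + 1) < ε / 3 := by
    calc 1 / ((n:ℝ) + 1) ≤ 1 / ((N1:ℝ) + 1) := by
          apply one_div_le_one_div_of_le (by positivity)
          exact_mod_cast Nat.succ_le_succ (le_max_left _ _)
      _ < ε / 3 := hN1
  have hn2 : |K (U n) - κ| < ε / 3 := by
    have := hN2 n (le_max_right _ _)
    rwa [Real.dist_eq] at this
  refine ⟨D n / 2, by linarith [hD0 n], XX n, ?_⟩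
  intro x hx s hs
  have hnear : |s - (U n + v * (1 + ρ * U n))| < D n := by
    calc |s - (U n + v * (1 + ρ * U n))| = |(s - t) + (t - (U n + v * (1 + ρ * U n)))| := by
          ring_nf
      _ ≤ |s - t| + |t - (U n + v * (1 + ρ * U n))| := abs_add_le _ _
      _ < D n / 2 + D n / 2 := add_lt_add hs (hUnear n)
      _ = D n := by ring
  have e1 := hXX n x hx s hnear
  have : |(h (x + s * φ x) - h x) - (K v + κ)| ≤
      |(h (x + s * φ x) - h x) - (K (U n) + K v)| + |K (U n) - κ| := by
    have hr : (h (x + s * φ x) - h x) - (K v + κ) =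
        ((h (x + s * φ x) - h x) - (K (U n) + K v)) + (K (U n) - κ) := by ring
    rw [hr]
    exact abs_add_le _ _
  calc |(h (x + s * φ x) - h x) - (K v + κ)| ≤ _ := this
    _ < 1 / (n + 1) + ε / 3 := add_lt_add e1 hn2
    _ < ε / 3 + ε / 3 := by linarith
    _ < ε := by linarith

lemma K_hom {φ h : ℝ → ℝ} {ρ : ℝ} {K : ℝ → ℝ} (hρ : 0 < ρ)
    (hφ : IsSelfEquivarying φ ρ)
    (hK : ∀ t ∈ Au φ h ρ, ConvNear φ h t (K t))
    {u v : ℝ} (huAu : u ∈ Au φ h ρ) (hu0 : 0 < u) (hu1 : u ≤ 1)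
    (hvAu : v ∈ Au φ h ρ) :
    K (u + v * (1 + ρ * u)) = K u + K v := by
  have cn : ConvNear φ h (u + v * (1 + ρ * u)) (K u + K v) := by
    intro ε hε
    obtain ⟨δ, hδ, spec⟩ := combo hρ hφ (hK v hvAu) ε hε
    obtain ⟨X, hX⟩ := spec u (K u) hu0 hu1 (hK u huAu)
    exact ⟨δ, hδ, X, hX⟩
  have hmem : (u + v * (1 + ρ * u)) ∈ Au φ h ρ := by
    refine ⟨?_, K u + K v, cn⟩
    nlinarith [mul_pos huAu.1 hvAu.1]
  exact convNear_unique (hK _ hmem) cn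

set_option maxHeartbeats 1000000 in
/-- Theorem 6 (Quantifier Weakening from Uniformity): for `ρ > 0`, if `A_u` is
dense in `G₊^ρ = (−1/ρ, ∞)` and `H†(t) = K(t)` on `A_u` (where `K(t)` is the
locally uniform limit of `Δ_t^φ h`), then `A_u = G₊^ρ` and there is `c` with
`H†(t) = c log(1 + ρt)` for all `t > −1/ρ`. -/
theorem quantifier_weakening (φ : ℝ → ℝ) (ρ : ℝ) (hρ : 0 < ρ)
    (hφ : IsSelfEquivarying φ ρ) (h : ℝ → ℝ) (K : ℝ → ℝ)
    (hK : ∀ t ∈ Au φ h ρ, ConvNear φ h t (K t))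
    (hdense : Set.Ioi (-1 / ρ) ⊆ closure (Au φ h ρ))
    (hHK : ∀ t ∈ Au φ h ρ, Hdag φ h t = ((K t : ℝ) : EReal)) :
    Au φ h ρ = Set.Ioi (-1 / ρ) ∧
    ∃ c : ℝ, ∀ t : ℝ, -1 / ρ < t →
      Hdag φ h t = ((c * Real.log (1 + ρ * t) : ℝ) : EReal) := by
  have hAu : Au φ h ρ = Set.Ioi (-1 / ρ) := stepB hρ hφ hK hdense
  refine ⟨hAu, ?_⟩
  -- chart and g
  set chart : ℝ → ℝ := fun y => (Real.exp (ρ * y) - 1) / ρ with hchart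
  have chart_mem : ∀ y, chart y ∈ Au φ h ρ := by
    intro y
    rw [hAu]
    simp only [Set.mem_Ioi, hchart]
    rw [div_lt_div_iff_of_pos_right hρ]
    nlinarith [Real.exp_pos (ρ * y)]
  set g : ℝ → ℝ := fun y => K (chart y) with hg
  set ε₀ : ℝ := Real.log (1 + ρ) / ρ with hε₀def
  have hε₀ : 0 < ε₀ := div_pos (Real.log_pos (by linarith)) hρ
  have hρε₀ : ρ * ε₀ = Real.log (1 + ρ) := by
    rw [hε₀def]; field_simp
  have hgadd_small : ∀ a, 0 < a → a ≤ ε₀ → ∀ b, g (a + b) = g a + g b := by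
    intro a ha0 ha1 b
    have hca0 : 0 < chart a := by
      simp only [hchart]
      apply div_pos _ hρ
      have : (1:ℝ) < Real.exp (ρ * a) := by
        rw [show (1:ℝ) = Real.exp 0 by simp]
        exact Real.exp_lt_exp.mpr (by positivity)
      linarith
    have hca1 : chart a ≤ 1 := by
      simp only [hchart]
      rw [div_le_one hρ]
      have : Real.exp (ρ * a) ≤ Real.exp (Real.log (1 + ρ)) := by
        apply Real.exp_le_exp.mpr
        rw [← hρε₀]
        exact mul_le_mul_of_nonneg_left ha1 hρ.le
      rw [Real.exp_log (by linarith : (0:ℝ) < 1 + ρ)] at this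
      linarith
    have chart_add : chart (a + b) = chart a + chart b * (1 + ρ * chart a) := by
      simp only [hchart]
      have hexp : Real.exp (ρ * (a + b)) = Real.exp (ρ * a) * Real.exp (ρ * b) := by
        rw [mul_add, Real.exp_add]
      rw [hexp]
      field_simp
      ring
    simp only [hg]
    rw [chart_add]
    exact K_hom hρ hφ hK (chart_mem a) hca0 hca1 (chart_mem b)
  have g0 : g 0 = 0 := by
    have := hgadd_small ε₀ hε₀ le_rfl 0
    rw [add_zero] at this
    linarith
  have pieces : ∀ (k : ℕ) (s : ℝ), 0 < s → s ≤ ε₀ → ∀ b, g (b + k * s) = g b + k * g s := by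
    intro k
    induction k with
    | zero => intro s _ _ b; simp
    | succ k ih =>
      intro s hs0 hs1 b
      have hb : b + ((k:ℝ) + 1) * s = s + (b + k * s) := by ring
      rw [show ((k+1:ℕ):ℝ) = (k:ℝ) + 1 by push_cast; ring, hb,
        hgadd_small s hs0 hs1 (b + k * s), ih s hs0 hs1 b]
      ring
  have gadd_pos : ∀ a, 0 < a → ∀ b, g (a + b) = g a + g b := by
    intro a ha b
    obtain ⟨n, hn⟩ := exists_nat_gt (a / ε₀)
    have hn0 : 0 < (n:ℝ) := lt_trans (div_pos ha hε₀) hn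
    set s := a / n with hs
    have hs0 : 0 < s := div_pos ha hn0
    have hs1 : s ≤ ε₀ := by
      rw [hs, div_le_iff₀ hn0]
      rw [div_lt_iff₀ hε₀] at hn
      nlinarith
    have hns : (n:ℝ) * s = a := by
      rw [hs, mul_comm, div_mul_cancel₀ a (ne_of_gt hn0)]
    have e1 : g (a + b) = g b + n * g s := by
      rw [show a + b = b + n * s by rw [hns]; ring]
      exact pieces n s hs0 hs1 b
    have e2 : g a = (n:ℝ) * g s := by
      have hh := pieces n s hs0 hs1 0
      simp only [g0, zero_add] at hh
      rw [← hns]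
      exact hh
    rw [e1, e2]; ring
  have gadd : ∀ a b, g (a + b) = g a + g b := by
    intro a b
    set p := |a| + 1 with hp
    have hp0 : 0 < p := by positivity
    have hpa : 0 < p + a := by
      have := neg_abs_le a
      rw [hp]; linarith
    have e1 : g (p + (a + b)) = g p + g (a + b) := gadd_pos p hp0 (a + b)
    have e2 : g (p + (a + b)) = g ((p + a) + b) := by ring_nf
    have e3 : g ((p + a) + b) = g (p + a) + g b := gadd_pos (p + a) hpa b
    have e4 : g (p + a) = g p + g a := gadd_pos p hp0 a
    linarith
  -- g is ℚ-linear
  set f : ℝ →+ ℝ := AddMonoidHom.mk' g gadd with hf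
  have gQ : ∀ q : ℚ, g (q : ℝ) = (q : ℝ) * g 1 := by
    intro q
    have := map_ratCast_smul f ℝ ℝ q (1 : ℝ)
    simpa [smul_eq_mul, hf] using this
  -- continuity of g
  have gcont : ∀ x : ℝ, ∀ ε > 0, ∃ δ > 0, ∀ y : ℝ, |y - x| < δ → |g y - g x| < ε := by
    intro x ε hε
    obtain ⟨δK, hδK, hKspec⟩ := K_cont hK (chart x) (chart_mem x) ε hε
    have hc : ContinuousAt chart x := by
      rw [hchart]; fun_prop
    obtain ⟨δ, hδ, hδspec⟩ := Metric.continuousAt_iff.mp hc δK hδK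
    refine ⟨δ, hδ, fun y hy => ?_⟩
    have h1 : dist y x < δ := by rwa [Real.dist_eq]
    have h2 := hδspec h1
    rw [Real.dist_eq] at h2
    exact hKspec (chart y) (chart_mem y) h2
  -- g is linear
  have glin : ∀ x : ℝ, g x = x * g 1 := by
    intro x
    by_contra hne
    set ε := |g x - x * g 1| with hεdef
    have hε : 0 < ε := abs_pos.mpr (sub_ne_zero.mpr hne)
    obtain ⟨δ, hδ, hspec⟩ := gcont x (ε / 3) (by linarith)
    set δ' := min δ (ε / (3 * (|g 1| + 1))) with hδ'def
    have hδ' : 0 < δ' := lt_min hδ (by positivity)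
    obtain ⟨q, hq⟩ := exists_rat_near x hδ'
    have h1 : |g q - g x| < ε / 3 := by
      apply hspec
      rw [abs_sub_comm]
      exact lt_of_lt_of_le hq (min_le_left _ _)
    have h2 : |(q:ℝ) * g 1 - x * g 1| < ε / 3 := by
      have ha : |(q:ℝ) * g 1 - x * g 1| = |(q:ℝ) - x| * |g 1| := by
        rw [← abs_mul]; ring_nf
      rw [ha]
      have hb : |(q:ℝ) - x| < δ' := by rwa [abs_sub_comm]
      have hc : |(q:ℝ) - x| * |g 1| ≤ δ' * |g 1| :=
        mul_le_mul_of_nonneg_right hb.le (abs_nonneg _)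
      have hd : δ' * |g 1| < ε / 3 := by
        have he : δ' ≤ ε / (3 * (|g 1| + 1)) := min_le_right _ _
        have hf2 : δ' * |g 1| ≤ ε / (3 * (|g 1| + 1)) * |g 1| :=
          mul_le_mul_of_nonneg_right he (abs_nonneg _)
        have hg2 : ε / (3 * (|g 1| + 1)) * |g 1| < ε / 3 := by
          rw [div_mul_eq_mul_div, div_lt_div_iff₀ (by positivity) (by norm_num)]
          nlinarith [abs_nonneg (g 1)]
        linarith
      linarith
    have : ε < ε := by
      calc ε = |g x - x * g 1| := rfl
        _ ≤ |g x - g q| + |g q - x * g 1| := by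
            have hr : g x - x * g 1 = (g x - g q) + (g q - x * g 1) := by ring
            rw [hr]; exact abs_add_le _ _
        _ = |g x - g q| + |(q:ℝ) * g 1 - x * g 1| := by rw [gQ q]
        _ < ε / 3 + ε / 3 := by
            rw [abs_sub_comm (g x) (g q)]
            exact add_lt_add h1 h2
        _ < ε := by linarith
    exact lt_irrefl _ this
  -- conclude
  refine ⟨g 1 / ρ, ?_⟩
  intro t ht
  have h1t : 0 < 1 + ρ * t := by
    rw [div_lt_iff₀ hρ] at ht
    nlinarith
  set y := Real.log (1 + ρ * t) / ρ with hy
  have hchy : chart y = t := by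
    simp only [hchart, hy]
    rw [show ρ * (Real.log (1 + ρ * t) / ρ) = Real.log (1 + ρ * t) by field_simp]
    rw [Real.exp_log h1t]
    field_simp
    ring
  have hKt : K t = g 1 / ρ * Real.log (1 + ρ * t) := by
    have := glin y
    simp only [hg, hchy] at this
    rw [this, hy]
    ring
  have htAu : t ∈ Au φ h ρ := by rw [hAu]; exact ht
  rw [hHK t htAu, hKt]
end

section
/- Let φ : ℝ → ℝ be self-equivarying with index ρ > 0, let h : ℝ → ℝ be a Baire function, and suppose the set S of t on which both H*(t) := limsup_{x→∞} (h(x + tφ(x)) − h(x)) and H_*(t) := liminf_{x→∞} (h(x + tφ(x)) − h(x)) are finite contains a half-line [a₀, ∞) with a₀ > 0. Then there exist constants C > 0, X and U > 1 such that h(x + uφ(x)) − h(x) ≤ C·log u for all x ≥ X and all u ≥ U. -/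
open Filter Topology Set



-- meager open set is empty
lemma meager_open_empty {u : Set ℝ} (hu : IsOpen u) (hm : IsMeagre u) : u = ∅ := by
  by_contra hne
  obtain ⟨x, hx⟩ := Set.nonempty_iff_ne_empty.2 hne
  have hd : Dense uᶜ := dense_of_mem_residual hm
  obtain ⟨y, hy, hy'⟩ := hd.exists_mem_open hu ⟨x, hx⟩
  exact hy hy'

lemma meager_union {s t : Set ℝ} (hs : IsMeagre s) (ht : IsMeagre t) : IsMeagre (s ∪ t) := by
  rw [IsMeagre, Set.compl_union]
  exact Filter.inter_mem hs ht

lemma not_meager_Icc {a b : ℝ} (hab : a < b) : ¬ IsMeagre (Set.Icc a b) := by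
  intro hm
  have : Set.Ioo a b = ∅ := meager_open_empty isOpen_Ioo (hm.mono Set.Ioo_subset_Icc_self)
  exact (Set.nonempty_Ioo.2 hab).ne_empty this

lemma pigeonhole_nonmeager {A : ℕ → Set ℝ} {a b : ℝ} (hab : a < b)
    (hcov : Set.Icc a b ⊆ ⋃ k, A k) : ∃ k, ¬ IsMeagre (A k ∩ Set.Icc a b) := by
  by_contra hc
  push_neg at hc
  apply not_meager_Icc hab
  have : Set.Icc a b ⊆ ⋃ k, A k ∩ Set.Icc a b := fun x hx => by
    obtain ⟨_, ⟨k, rfl⟩, hk⟩ := hcov hx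
    exact Set.mem_iUnion.2 ⟨k, hk, hx⟩
  exact (isMeagre_iUnion hc).mono this

/-- a nonmeager Baire-measurable set is comeager on some nonempty open set -/
lemma exists_open_comeager {A : Set ℝ} (hA : BaireMeasurableSet A) (hnm : ¬ IsMeagre A) :
    ∃ u : Set ℝ, IsOpen u ∧ u.Nonempty ∧ IsMeagre (u \ A) ∧ u ⊆ closure A := by
  obtain ⟨u, huo, hu⟩ := hA.residualEq_isOpen
  rw [eventuallyEq_set] at hu
  have hsym : IsMeagre {x | ¬ (x ∈ A ↔ x ∈ u)} := by
    rw [IsMeagre, Set.compl_setOf]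
    simp only [not_not]
    exact hu
  have h1 : IsMeagre (u \ A) := hsym.mono (fun x ⟨hxu, hxA⟩ => by simp [hxu, hxA])
  have h2 : IsMeagre (A \ u) := hsym.mono (fun x ⟨hxA, hxu⟩ => by simp [hxu, hxA])
  refine ⟨u, huo, ?_, h1, ?_⟩
  · rcases Set.eq_empty_or_nonempty u with rfl | hne
    · exact absurd (h2.mono (by simp)) hnm
    · exact hne
  · -- u ⊆ closure A : else some open ball in u misses A, ball ⊆ u \ A meager, contradiction
    intro x hxu
    by_contra hx
    rw [mem_closure_iff] at hx
    push_neg at hx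
    obtain ⟨v, hvo, hxv, hv⟩ := hx
    have : IsMeagre (v ∩ u) := h1.mono (show v ∩ u ⊆ u \ A from fun y ⟨hyv, hyu⟩ => ⟨hyu, fun hyA => (Set.eq_empty_iff_forall_notMem.1 hv y) ⟨hyv, hyA⟩⟩)
    have he := meager_open_empty (hvo.inter huo) this
    exact (Set.eq_empty_iff_forall_notMem.1 he x) ⟨hxv, hxu⟩



noncomputable def affH (p q : ℝ) (hq : q ≠ 0) : ℝ ≃ₜ ℝ :=
  (Homeomorph.mulRight₀ q hq).trans (Homeomorph.addLeft p)

lemma affH_apply (p q : ℝ) (hq : q ≠ 0) (s : ℝ) : affH p q hq s = p + s * q := rfl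

lemma baire_preimage_affine {S : Set ℝ} (hS : BaireMeasurableSet S) (p q : ℝ) (hq : q ≠ 0) :
    BaireMeasurableSet {s : ℝ | p + s * q ∈ S} := by
  have := hS.preimage (affH p q hq).continuous (affH p q hq).isOpenMap
  exact this

lemma meager_preimage_affine {S : Set ℝ} (hS : IsMeagre S) (p q : ℝ) (hq : q ≠ 0) :
    IsMeagre {s : ℝ | p + s * q ∈ S} :=
  hS.preimage_of_isOpenMap (affH p q hq).continuous (affH p q hq).isOpenMap

lemma baire_upper_set {h : ℝ → ℝ} (hB : ∀ U : Set ℝ, IsOpen U → BaireMeasurableSet (h ⁻¹' U))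
    (p q c : ℝ) (hq : q ≠ 0) : BaireMeasurableSet {s : ℝ | h (p + s * q) - h p ≤ c} := by
  have h1 : BaireMeasurableSet (h ⁻¹' Set.Iic (c + h p)) := by
    have := (hB _ isOpen_Ioi : BaireMeasurableSet (h ⁻¹' Set.Ioi (c + h p))).compl
    convert this using 1
    ext y; simp [not_lt]
  have := baire_preimage_affine h1 p q hq
  convert this using 1
  ext s
  simp only [Set.mem_setOf_eq, Set.mem_preimage, Set.mem_Iic]
  constructor <;> intro hh <;> linarith

lemma baire_lower_set {h : ℝ → ℝ} (hB : ∀ U : Set ℝ, IsOpen U → BaireMeasurableSet (h ⁻¹' U))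
    (p q c : ℝ) (hq : q ≠ 0) : BaireMeasurableSet {s : ℝ | c ≤ h (p + s * q) - h p} := by
  have h1 : BaireMeasurableSet (h ⁻¹' Set.Ici (c + h p)) := by
    have := (hB _ isOpen_Iio : BaireMeasurableSet (h ⁻¹' Set.Iio (c + h p))).compl
    convert this using 1
    ext y; simp [not_lt]
  have := baire_preimage_affine h1 p q hq
  convert this using 1
  ext s
  simp only [Set.mem_setOf_eq, Set.mem_preimage, Set.mem_Ici]
  constructor <;> intro hh <;> linarith

lemma ev_of_limsup_lt {g : ℝ → ℝ}
    (hg : Filter.limsup (fun x => ((g x : ℝ) : EReal)) atTop < ⊤) :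
    ∃ m : ℕ, ∀ᶠ x in atTop, g x ≤ (m : ℝ) := by
  obtain ⟨r, hr1, -⟩ := EReal.lt_iff_exists_real_btwn.1 hg
  refine ⟨⌈r⌉₊, ?_⟩
  have := Filter.eventually_lt_of_limsup_lt hr1
  filter_upwards [this] with x hx
  have : g x < r := by exact_mod_cast hx
  exact this.le.trans (le_trans (Nat.le_ceil r) le_rfl)

lemma ev_of_bot_lt_liminf {g : ℝ → ℝ}
    (hg : (⊥ : EReal) < Filter.liminf (fun x => ((g x : ℝ) : EReal)) atTop) :
    ∃ m : ℕ, ∀ᶠ x in atTop, -(m : ℝ) ≤ g x := by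
  obtain ⟨r, -, hr2⟩ := EReal.lt_iff_exists_real_btwn.1 hg
  refine ⟨⌈-r⌉₊, ?_⟩
  have := Filter.eventually_lt_of_lt_liminf hr2
  filter_upwards [this] with x hx
  have hrg : r < g x := by exact_mod_cast hx
  have : -(⌈-r⌉₊ : ℝ) ≤ r := by
    have := Nat.le_ceil (-r); linarith
  linarith

set_option maxHeartbeats 1000000 in
lemma uniform_upper_bound (φ : ℝ → ℝ) (ρ : ℝ) (hρ : 0 < ρ)
    (hpos : ∀ᶠ x in atTop, 0 < φ x)
    (hunif : ∀ T > 0, TendstoUniformlyOn (fun x t => φ (x + t * φ x) / φ x)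
      (fun t => 1 + ρ * t) atTop (Set.Icc 0 T))
    (h : ℝ → ℝ) (hB : ∀ U : Set ℝ, IsOpen U → BaireMeasurableSet (h ⁻¹' U))
    (a₀ : ℝ) (ha₀ : 0 < a₀)
    (hup : ∀ t, a₀ ≤ t → ∃ m : ℕ, ∀ᶠ x in atTop, h (x + t * φ x) - h x ≤ (m : ℝ))
    (hlo : ∀ t, a₀ ≤ t → ∃ m : ℕ, ∀ᶠ x in atTop, -(m : ℝ) ≤ h (x + t * φ x) - h x)
    (a b : ℝ) (ha : a₀ ≤ a) (hab : a ≤ b) :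
    ∃ M X : ℝ, ∀ x ≥ X, ∀ t ∈ Set.Icc a b, h (x + t * φ x) - h x ≤ M := by
  by_contra hc
  push_neg at hc
  -- extract bad sequences
  have H : ∀ n : ℕ, ∃ x, (n : ℝ) ≤ x ∧ ∃ t, t ∈ Set.Icc a b ∧ (n : ℝ) < h (x + t * φ x) - h x := by
    intro n
    obtain ⟨x, hx, t, ht, hlt⟩ := hc n n
    exact ⟨x, hx, t, ht, hlt⟩
  choose x0 hx0 t0 ht0 hΔ0 using H
  obtain ⟨t₀, ht₀mem, σ, hσ, hσt⟩ := isCompact_Icc.tendsto_subseq ht0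
  set xs : ℕ → ℝ := x0 ∘ σ with hxs
  set ts : ℕ → ℝ := t0 ∘ σ with hts
  have hxsn : ∀ n : ℕ, (n : ℝ) ≤ xs n := by
    intro n
    refine le_trans ?_ (hx0 (σ n))
    exact_mod_cast hσ.le_apply
  have hΔs : ∀ n : ℕ, (n : ℝ) < h (xs n + ts n * φ (xs n)) - h (xs n) := by
    intro n
    refine lt_of_le_of_lt ?_ (hΔ0 (σ n))
    exact_mod_cast hσ.le_apply
  have htsm : ∀ n, ts n ∈ Set.Icc a b := fun n => ht0 (σ n)
  have hxtop : Tendsto xs atTop atTop :=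
    tendsto_atTop_mono hxsn tendsto_natCast_atTop_atTop
  -- positivity threshold
  obtain ⟨X₀, hX₀⟩ := eventually_atTop.1 hpos
  set n₁ : ℕ := ⌈X₀⌉₊ with hn₁
  have ha0b : (0:ℝ) < b := lt_of_lt_of_le ha₀ (le_trans ha hab)
  have htspos : ∀ n, 0 < ts n := fun n => lt_of_lt_of_le (lt_of_lt_of_le ha₀ ha) (htsm n).1
  have hφxs : ∀ n, n₁ ≤ n → 0 < φ (xs n) := by
    intro n hn
    refine hX₀ _ (le_trans (Nat.le_ceil X₀) (le_trans ?_ (hxsn n)))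
    exact_mod_cast hn
  set z : ℕ → ℝ := fun n => xs n + ts n * φ (xs n) with hz
  have hzxs : ∀ n, n₁ ≤ n → xs n ≤ z n := by
    intro n hn
    have := mul_pos (htspos n) (hφxs n hn)
    simp only [hz]; linarith
  have hφz : ∀ n, n₁ ≤ n → 0 < φ (z n) := by
    intro n hn
    refine hX₀ _ (le_trans ?_ (hzxs n hn))
    refine le_trans (Nat.le_ceil X₀) (le_trans ?_ (hxsn n))
    exact_mod_cast hn
  set r : ℕ → ℝ := fun n => φ (z n) / φ (xs n) with hrdef
  have hrn_pos : ∀ n, n₁ ≤ n → 0 < r n := fun n hn => div_pos (hφz n hn) (hφxs n hn)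
  set r₀ : ℝ := 1 + ρ * t₀ with hr₀
  have hr₀pos : 0 < r₀ := by
    have : 0 < t₀ := lt_of_lt_of_le (lt_of_lt_of_le ha₀ ha) ht₀mem.1
    have := mul_pos hρ this
    simp only [hr₀]; linarith
  -- convergence r n → r₀
  have hr : Tendsto r atTop (𝓝 r₀) := by
    rw [Metric.tendsto_nhds]
    intro ε hε
    have huni := hunif b ha0b
    rw [Metric.tendstoUniformlyOn_iff] at huni
    have h1 := hxtop.eventually (huni (ε/2) (by linarith))
    have h2 : ∀ᶠ n in atTop, dist (ts n) t₀ < ε / (2 * ρ) := by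
      have := Metric.tendsto_nhds.1 hσt (ε / (2*ρ)) (by positivity)
      exact this
    filter_upwards [h1, h2] with n hn1 hn2
    have hmem : ts n ∈ Set.Icc 0 b := ⟨(htspos n).le, (htsm n).2⟩
    have hA := hn1 (ts n) hmem
    rw [Real.dist_eq] at hA hn2 ⊢
    have hrw : r n = φ (xs n + ts n * φ (xs n)) / φ (xs n) := rfl
    rw [hrw]
    have htri : |r₀ - φ (xs n + ts n * φ (xs n)) / φ (xs n)| ≤
        |(1 + ρ * ts n) - φ (xs n + ts n * φ (xs n)) / φ (xs n)| + |r₀ - (1 + ρ * ts n)| := by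
      have := abs_sub_le r₀ (1 + ρ * ts n) (φ (xs n + ts n * φ (xs n)) / φ (xs n))
      linarith [this]
    have hb2 : |r₀ - (1 + ρ * ts n)| = ρ * |ts n - t₀| := by
      rw [hr₀]
      rw [show (1 + ρ * t₀) - (1 + ρ * ts n) = ρ * (t₀ - ts n) by ring]
      rw [abs_mul, abs_of_pos hρ, abs_sub_comm]
    have hb3 : ρ * |ts n - t₀| < ρ * (ε / (2 * ρ)) := by
      exact (mul_lt_mul_iff_right₀ hρ).2 hn2
    have hb4 : ρ * (ε / (2 * ρ)) = ε / 2 := by field_simp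
    rw [abs_sub_comm]
    calc |r₀ - φ (xs n + ts n * φ (xs n)) / φ (xs n)|
        ≤ |(1 + ρ * ts n) - φ (xs n + ts n * φ (xs n)) / φ (xs n)| + |r₀ - (1 + ρ * ts n)| := htri
      _ < ε/2 + ε/2 := add_lt_add hA (by rw [hb2]; linarith)
      _ = ε := by ring
  -- W sets (lower bounds along z)
  set W : ℕ → Set ℝ := fun k =>
    {w | ∀ n : ℕ, k + n₁ ≤ n → -(k : ℝ) ≤ h (z n + w * φ (z n)) - h (z n)} with hW
  have hWB : ∀ k, BaireMeasurableSet (W k) := by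
    intro k
    have : W k = ⋂ (n : ℕ), ⋂ (_ : k + n₁ ≤ n),
        {w | -(k:ℝ) ≤ h (z n + w * φ (z n)) - h (z n)} := by
      ext w; simp [hW, Set.mem_iInter]
    rw [this]
    refine BaireMeasurableSet.iInter (fun n => ?_)
    refine BaireMeasurableSet.iInter (fun hn => ?_)
    exact baire_lower_set hB (z n) (φ (z n)) (-(k:ℝ)) (ne_of_gt (hφz n (le_trans (Nat.le_add_left _ _) hn)))
  have hWcov : Set.Icc a₀ (a₀ + 1) ⊆ ⋃ k, W k := by
    intro w hw
    obtain ⟨m, hm⟩ := hlo w hw.1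
    obtain ⟨Xw, hXw⟩ := eventually_atTop.1 hm
    refine Set.mem_iUnion.2 ⟨m + ⌈Xw⌉₊, fun n hn => ?_⟩
    have hn1 : n₁ ≤ n := le_trans (Nat.le_add_left _ _) hn
    have hzn : Xw ≤ z n := by
      refine le_trans ?_ (hzxs n hn1)
      refine le_trans (Nat.le_ceil Xw) (le_trans ?_ (hxsn n))
      exact_mod_cast le_trans (le_trans (Nat.le_add_left _ _) (Nat.le_add_right _ _)) hn
    have := hXw (z n) hzn
    have hmk : (m : ℝ) ≤ ((m + ⌈Xw⌉₊ : ℕ) : ℝ) := by exact_mod_cast Nat.le_add_right m _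
    linarith
  obtain ⟨k, hknm⟩ := pigeonhole_nonmeager (by linarith : a₀ < a₀ + 1) hWcov
  have hWIccB : BaireMeasurableSet (W k ∩ Set.Icc a₀ (a₀+1)) :=
    (hWB k).inter measurableSet_Icc.baireMeasurableSet
  obtain ⟨VW, hVWo, hVWne, hVWme, hVWcl⟩ := exists_open_comeager hWIccB hknm
  have hVWsub : VW ⊆ Set.Icc a₀ (a₀+1) := by
    refine hVWcl.trans ?_
    refine (closure_mono Set.inter_subset_right).trans ?_
    rw [isClosed_Icc.closure_eq]
  obtain ⟨w₀, hw₀⟩ := hVWne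
  obtain ⟨δ, hδpos, hδball⟩ := Metric.isOpen_iff.1 hVWo w₀ hw₀
  have hwmid : w₀ - δ/2 ∈ VW := by
    refine hδball ?_
    rw [Metric.mem_ball, Real.dist_eq]
    rw [abs_of_nonpos (by linarith)]
    linarith
  have hw₀a₀ : a₀ ≤ w₀ - δ/2 := (hVWsub hwmid).1
  -- E sets (upper bounds along xs)
  set lo : ℝ := t₀ + r₀ * (w₀ - δ/2) with hlo_def
  set hi : ℝ := t₀ + r₀ * (w₀ + δ/2) with hhi_def
  have hlohi : lo < hi := by
    have : r₀ * (w₀ - δ/2) < r₀ * (w₀ + δ/2) := by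
      refine (mul_lt_mul_iff_right₀ hr₀pos).2 (by linarith)
    simp only [hlo_def, hhi_def]; linarith
  have hloa₀ : a₀ ≤ lo := by
    have ht₀a : a₀ ≤ t₀ := le_trans ha ht₀mem.1
    have : 0 < r₀ * (w₀ - δ/2) := mul_pos hr₀pos (by linarith)
    simp only [hlo_def]; linarith
  set E : ℕ → Set ℝ := fun k' =>
    {s | ∀ n : ℕ, k' + n₁ ≤ n → h (xs n + s * φ (xs n)) - h (xs n) ≤ (k' : ℝ)} with hE
  have hEB : ∀ k', BaireMeasurableSet (E k') := by
    intro k'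
    have : E k' = ⋂ (n : ℕ), ⋂ (_ : k' + n₁ ≤ n),
        {s | h (xs n + s * φ (xs n)) - h (xs n) ≤ (k':ℝ)} := by
      ext s; simp [hE, Set.mem_iInter]
    rw [this]
    refine BaireMeasurableSet.iInter (fun n => BaireMeasurableSet.iInter (fun hn => ?_))
    exact baire_upper_set hB (xs n) (φ (xs n)) (k':ℝ)
      (ne_of_gt (hφxs n (le_trans (Nat.le_add_left _ _) hn)))
  have hEcov : Set.Icc lo hi ⊆ ⋃ k', E k' := by
    intro s hs
    obtain ⟨m, hm⟩ := hup s (le_trans hloa₀ hs.1)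
    obtain ⟨Xs, hXs⟩ := eventually_atTop.1 hm
    refine Set.mem_iUnion.2 ⟨m + ⌈Xs⌉₊, fun n hn => ?_⟩
    have hxn : Xs ≤ xs n := by
      refine le_trans (Nat.le_ceil Xs) (le_trans ?_ (hxsn n))
      exact_mod_cast le_trans (le_trans (Nat.le_add_left _ _) (Nat.le_add_right _ _)) hn
    have := hXs (xs n) hxn
    have hmk : (m : ℝ) ≤ ((m + ⌈Xs⌉₊ : ℕ) : ℝ) := by exact_mod_cast Nat.le_add_right m _
    linarith
  obtain ⟨k', hk'nm⟩ := pigeonhole_nonmeager hlohi hEcov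
  have hEIccB : BaireMeasurableSet (E k' ∩ Set.Icc lo hi) :=
    (hEB k').inter measurableSet_Icc.baireMeasurableSet
  obtain ⟨VE, hVEo, hVEne, hVEme, hVEcl⟩ := exists_open_comeager hEIccB hk'nm
  have hVEsub : VE ⊆ Set.Icc lo hi := by
    refine hVEcl.trans ((closure_mono Set.inter_subset_right).trans ?_)
    rw [isClosed_Icc.closure_eq]
  obtain ⟨s₀, hs₀⟩ := hVEne
  obtain ⟨ε₀, hε₀pos, hε₀ball⟩ := Metric.isOpen_iff.1 hVEo s₀ hs₀
  -- uniform convergence of the affine maps on [lo,hi]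
  set Sb : ℝ := |lo| + |hi| with hSb
  have hSbnn : 0 ≤ Sb := by positivity
  have habs : ∀ s ∈ Set.Icc lo hi, |s| ≤ Sb := by
    intro s hs
    rw [abs_le]
    constructor
    · have := neg_abs_le lo; have := abs_nonneg hi; simp only [hSb]; linarith [hs.1]
    · have := le_abs_self hi; have := abs_nonneg lo; simp only [hSb]; linarith [hs.2]
  have hc1 : Tendsto (fun n => (r n)⁻¹) atTop (𝓝 r₀⁻¹) := hr.inv₀ hr₀pos.ne'
  have hc2 : Tendsto (fun n => ts n * (r n)⁻¹) atTop (𝓝 (t₀ * r₀⁻¹)) := hσt.mul hc1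
  have hev1 : ∀ᶠ n in atTop, |(r n)⁻¹ - r₀⁻¹| < δ/(8*(Sb+1)) := by
    have := Metric.tendsto_nhds.1 hc1 (δ/(8*(Sb+1))) (by positivity)
    filter_upwards [this] with n hn
    rw [Real.dist_eq] at hn; exact hn
  have hev2 : ∀ᶠ n in atTop, |ts n * (r n)⁻¹ - t₀ * r₀⁻¹| < δ/8 := by
    have := Metric.tendsto_nhds.1 hc2 (δ/8) (by positivity)
    filter_upwards [this] with n hn
    rw [Real.dist_eq] at hn; exact hn
  have hconv : ∀ᶠ n in atTop, ∀ s ∈ Set.Icc lo hi,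
      |(s - ts n) * (r n)⁻¹ - (s - t₀) * r₀⁻¹| < δ/2 := by
    filter_upwards [hev1, hev2] with n hn1 hn2 s hs
    have hid : (s - ts n) * (r n)⁻¹ - (s - t₀) * r₀⁻¹
        = s * ((r n)⁻¹ - r₀⁻¹) - (ts n * (r n)⁻¹ - t₀ * r₀⁻¹) := by ring
    rw [hid]
    have h1 : |s * ((r n)⁻¹ - r₀⁻¹)| ≤ Sb * |(r n)⁻¹ - r₀⁻¹| := by
      rw [abs_mul]
      exact mul_le_mul_of_nonneg_right (habs s hs) (abs_nonneg _)
    have h2 : Sb * |(r n)⁻¹ - r₀⁻¹| ≤ Sb * (δ/(8*(Sb+1))) :=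
      mul_le_mul_of_nonneg_left hn1.le hSbnn
    have h3 : Sb * (δ/(8*(Sb+1))) ≤ δ/8 := by
      rw [show Sb * (δ / (8 * (Sb + 1))) = δ * Sb / (8 * (Sb + 1)) by ring]
      rw [div_le_div_iff₀ (by positivity) (by norm_num)]
      nlinarith
    calc |s * ((r n)⁻¹ - r₀⁻¹) - (ts n * (r n)⁻¹ - t₀ * r₀⁻¹)|
        ≤ |s * ((r n)⁻¹ - r₀⁻¹)| + |ts n * (r n)⁻¹ - t₀ * r₀⁻¹| := abs_sub _ _
      _ < δ/8 + δ/8 := by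
          refine add_lt_add_of_le_of_lt (le_trans h1 (le_trans h2 h3)) hn2
      _ ≤ δ/2 := by linarith
  obtain ⟨N, hN⟩ := eventually_atTop.1 hconv
  -- choose the index n
  set n : ℕ := N + n₁ + k + k' + 1 with hn_def
  have hnn₁ : n₁ ≤ n := by omega
  have hnk : k + n₁ ≤ n := by omega
  have hnk' : k' + n₁ ≤ n := by omega
  have hnN : N ≤ n := by omega
  have hφxsn : 0 < φ (xs n) := hφxs n hnn₁
  have hφzn : 0 < φ (z n) := hφz n hnn₁
  have hrnpos : 0 < r n := hrn_pos n hnn₁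
  -- the meager obstruction sets
  set q : ℝ := (r n)⁻¹ with hq_def
  have hqne : q ≠ 0 := inv_ne_zero hrnpos.ne'
  set p : ℝ := -(ts n * (r n)⁻¹) with hp_def
  have hwmap : ∀ s : ℝ, p + s * q = (s - ts n) * (r n)⁻¹ := by
    intro s; simp only [hp_def, hq_def]; ring
  set MW : Set ℝ := VW \ (W k ∩ Set.Icc a₀ (a₀+1)) with hMW
  set S1 : Set ℝ := {s : ℝ | p + s * q ∈ MW} with hS1
  have hS1me : IsMeagre S1 := meager_preimage_affine hVWme p q hqne
  set S2 : Set ℝ := VE \ (E k' ∩ Set.Icc lo hi) with hS2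
  have hS2me : IsMeagre S2 := hVEme
  -- find a good point s*
  have : ¬ IsMeagre (Set.Icc (s₀ - ε₀/2) (s₀ + ε₀/2)) := not_meager_Icc (by linarith)
  have hex : ∃ s, s ∈ Set.Icc (s₀ - ε₀/2) (s₀ + ε₀/2) ∧ s ∉ S1 ∧ s ∉ S2 := by
    by_contra hcon
    push_neg at hcon
    refine this ((meager_union hS1me hS2me).mono ?_)
    intro s hs
    rcases Classical.em (s ∈ S1) with h1 | h1
    · exact Set.mem_union_left _ h1
    · exact Set.mem_union_right _ ((hcon s hs h1))
  obtain ⟨sstar, hsIcc, hsS1, hsS2⟩ := hex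
  have hsball : sstar ∈ Metric.ball s₀ ε₀ := by
    rw [Metric.mem_ball, Real.dist_eq, abs_lt]
    constructor <;> [linarith [hsIcc.1]; linarith [hsIcc.2]]
  have hsVE : sstar ∈ VE := hε₀ball hsball
  have hsE : sstar ∈ E k' ∩ Set.Icc lo hi := by
    by_contra hcon
    exact hsS2 ⟨hsVE, hcon⟩
  have hslohi : sstar ∈ Set.Icc lo hi := hsE.2
  -- w* lands in VW
  set wstar : ℝ := p + sstar * q with hws
  have hwstar_eq : wstar = (sstar - ts n) * (r n)⁻¹ := by rw [hws, hwmap]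
  have htheta1 : w₀ - δ/2 ≤ (sstar - t₀) * r₀⁻¹ := by
    rw [← div_eq_mul_inv, le_div_iff₀ hr₀pos]
    have h1 := hslohi.1
    simp only [hlo_def] at h1
    nlinarith
  have htheta2 : (sstar - t₀) * r₀⁻¹ ≤ w₀ + δ/2 := by
    rw [← div_eq_mul_inv, div_le_iff₀ hr₀pos]
    have h2 := hslohi.2
    simp only [hhi_def] at h2
    nlinarith
  have hwball : wstar ∈ Metric.ball w₀ δ := by
    have hcv := hN n hnN sstar hslohi
    rw [← hwstar_eq] at hcv
    rw [Metric.mem_ball, Real.dist_eq, abs_lt]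
    rw [abs_lt] at hcv
    obtain ⟨hcv1, hcv2⟩ := hcv
    clear_value wstar
    have hgoal1 : -δ < wstar - w₀ := by
      have := add_lt_add_of_lt_of_le hcv1 htheta1
      linarith only [this]
    have hgoal2 : wstar - w₀ < δ := by
      have := add_lt_add_of_lt_of_le hcv2 htheta2
      linarith only [this]
    exact ⟨hgoal1, hgoal2⟩
  have hwVW : wstar ∈ VW := hδball hwball
  have hwW : wstar ∈ W k ∩ Set.Icc a₀ (a₀+1) := by
    by_contra hcon
    exact hsS1 ⟨hwVW, hcon⟩
  -- the key identity
  have hφzr : φ (z n) = r n * φ (xs n) := by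
    rw [show r n = φ (z n) / φ (xs n) from rfl]
    field_simp
  have hpoint : z n + wstar * φ (z n) = xs n + sstar * φ (xs n) := by
    rw [hwstar_eq, hφzr]
    have : (sstar - ts n) * (r n)⁻¹ * (r n * φ (xs n)) = (sstar - ts n) * φ (xs n) := by
      field_simp
    rw [this]
    simp only [hz]; ring
  -- contradiction
  have hupper : h (xs n + sstar * φ (xs n)) - h (xs n) ≤ (k' : ℝ) := hsE.1 n hnk'
  have hlower : -(k : ℝ) ≤ h (z n + wstar * φ (z n)) - h (z n) := hwW.1 n hnk
  rw [hpoint] at hlower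
  have hfinal : h (z n) - h (xs n) ≤ (k' : ℝ) + k := by linarith
  have hΔn := hΔs n
  have hcast : (k : ℝ) + k' < (n : ℝ) := by
    have h1 : k + k' < n := by omega
    have h2 := (Nat.cast_lt (α := ℝ)).2 h1
    push_cast at h2
    convert h2 using 2 <;> push_cast <;> ring
  have : h (z n) - h (xs n) = h (xs n + ts n * φ (xs n)) - h (xs n) := rfl
  linarith [hΔn, hfinal, hcast]

lemma chain_induction (φ h : ℝ → ℝ) (a₀ B M' q₁ q₂ Xs : ℝ)
    (ha₀ : 0 < a₀) (hq₁ : 1 < q₁) (hq₂ : 0 < q₂) (hM'pos : 0 < M')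
    (hB : a₀ * q₂ + a₀ ≤ B)
    (hM : ∀ x, Xs ≤ x → ∀ t ∈ Set.Icc a₀ B, h (x + t * φ x) - h x ≤ M')
    (hφpos : ∀ x, Xs ≤ x → 0 < φ x)
    (hstep : ∀ x, Xs ≤ x → q₁ ≤ φ (x + a₀ * φ x) / φ x ∧ φ (x + a₀ * φ x) / φ x ≤ q₂) :
    ∀ n : ℕ, ∀ u, a₀ ≤ u → u ≤ B * q₁ ^ n → ∀ x, Xs ≤ x →
      h (x + u * φ x) - h x ≤ ((n : ℝ) + 1) * M' := by
  have hBpos : 0 < B := lt_of_lt_of_le (by positivity) hB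
  have ha₀B : a₀ ≤ B := by nlinarith
  intro n
  induction n with
  | zero =>
    intro u hu hub x hx
    rw [pow_zero, mul_one] at hub
    have := hM x hx u ⟨hu, hub⟩
    push_cast
    linarith
  | succ n ih =>
    intro u hu hub x hx
    by_cases hcase : u ≤ B
    · have := hM x hx u ⟨hu, hcase⟩
      have h2 : M' ≤ ((n:ℝ) + 1 + 1) * M' := by nlinarith [Nat.cast_nonneg (α := ℝ) n]
      push_cast
      linarith
    · push_neg at hcase
      set x' : ℝ := x + a₀ * φ x with hx'def
      have hφx := hφpos x hx
      have hxx' : x ≤ x' := by nlinarith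
      have hx' : Xs ≤ x' := le_trans hx hxx'
      obtain ⟨hr1, hr2⟩ := hstep x hx
      set R : ℝ := φ x' / φ x with hRdef
      have hφx' : 0 < φ x' := hφpos x' hx'
      have hRpos : 0 < R := div_pos hφx' hφx
      have hφx'eq : φ x' = R * φ x := by
        rw [hRdef]; field_simp
      set u' : ℝ := (u - a₀) / R with hu'def
      have hu'a : a₀ ≤ u' := by
        rw [hu'def, le_div_iff₀ hRpos]
        nlinarith
      have hpow : (0:ℝ) < q₁ ^ n := pow_pos (by linarith) n
      have hu'b : u' ≤ B * q₁ ^ n := by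
        rw [hu'def, div_le_iff₀ hRpos]
        have hups : u ≤ B * q₁ ^ n * q₁ := by
          rw [pow_succ] at hub; linarith [hub]
        nlinarith [mul_le_mul_of_nonneg_left hr1 (le_of_lt (mul_pos hBpos hpow))]
      have hpoint : x + u * φ x = x' + u' * φ x' := by
        rw [hφx'eq, hu'def]
        have : (u - a₀) / R * (R * φ x) = (u - a₀) * φ x := by
          field_simp
        rw [this, hx'def]; ring
      have hsplit : h (x + u * φ x) - h x
          = (h (x' + u' * φ x') - h x') + (h (x + a₀ * φ x) - h x) := by
        rw [hpoint, hx'def]; ring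
      have hb1 := ih u' hu'a hu'b x' hx'
      have hb2 := hM x hx a₀ ⟨le_refl a₀, ha₀B⟩
      rw [hsplit]
      push_cast
      linarith


/-- A function is Baire if preimages of open sets have the Baire property. -/
def BaireFun (h : ℝ → ℝ) : Prop :=
  ∀ U : Set ℝ, IsOpen U → BaireMeasurableSet (h ⁻¹' U)

/-- Theorem 10 (global logarithmic bound): for `φ ∈ SE` with index `ρ > 0` and
`h` Baire, if `H^*(t) = limsup_{x→∞} Δ_t^φ h(x)` and
`H_*(t) = liminf_{x→∞} Δ_t^φ h(x)` are finite for all `t` in a half-line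
`[a₀, ∞)` with `a₀ > 0`, then there are constants `C > 0`, `X` and `U > 1` with
`h(x + uφ(x)) − h(x) ≤ C log u` for all `x ≥ X` and `u ≥ U`. -/
theorem global_log_bound (φ : ℝ → ℝ) (ρ : ℝ) (hρ : 0 < ρ)
    (hφ : IsSelfEquivarying φ ρ) (h : ℝ → ℝ) (hB : BaireFun h)
    (a₀ : ℝ) (ha₀ : 0 < a₀)
    (hfin : ∀ t ≥ a₀,
      (⊥ : EReal) <
        Filter.liminf (fun x => ((h (x + t * φ x) - h x : ℝ) : EReal)) atTop ∧
      Filter.limsup (fun x => ((h (x + t * φ x) - h x : ℝ) : EReal)) atTop < ⊤) :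
    ∃ C > (0:ℝ), ∃ X U : ℝ, 1 < U ∧ ∀ x ≥ X, ∀ u ≥ U,
      h (x + u * φ x) - h x ≤ C * Real.log u := by
  obtain ⟨hpos, -, hunif⟩ := hφ
  have hup : ∀ t, a₀ ≤ t → ∃ m : ℕ, ∀ᶠ x in atTop, h (x + t * φ x) - h x ≤ (m : ℝ) :=
    fun t ht => ev_of_limsup_lt (hfin t ht).2
  have hlo : ∀ t, a₀ ≤ t → ∃ m : ℕ, ∀ᶠ x in atTop, -(m : ℝ) ≤ h (x + t * φ x) - h x :=
    fun t ht => ev_of_bot_lt_liminf (hfin t ht).1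
  -- parameters
  set ε : ℝ := ρ * a₀ / 2 with hε
  have hεpos : 0 < ε := by positivity
  set q₁ : ℝ := 1 + ρ * a₀ / 2 with hq₁def
  set q₂ : ℝ := 1 + 3 * (ρ * a₀) / 2 with hq₂def
  have hq₁ : 1 < q₁ := by simp only [hq₁def]; nlinarith
  have hq₂pos : 0 < q₂ := by simp only [hq₂def]; nlinarith
  set B : ℝ := a₀ * q₂ + a₀ + 1 with hBdef
  have hBB : a₀ * q₂ + a₀ ≤ B := by simp only [hBdef]; linarith
  have hBpos : 0 < B := by simp only [hBdef]; nlinarith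
  have hB1 : 1 ≤ B := by simp only [hBdef]; nlinarith
  -- ratio bounds at t = a₀
  have huni := hunif a₀ ha₀
  rw [Metric.tendstoUniformlyOn_iff] at huni
  obtain ⟨X₂, hX₂⟩ := eventually_atTop.1 (huni ε hεpos)
  obtain ⟨X₀, hX₀⟩ := eventually_atTop.1 hpos
  -- uniform bound on [a₀, B]
  obtain ⟨M, XM, hM⟩ := uniform_upper_bound φ ρ hρ hpos hunif h hB a₀ ha₀ hup hlo
    a₀ B le_rfl (by simp only [hBdef]; nlinarith)
  set Xs : ℝ := max (max X₀ X₂) XM with hXs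
  set M' : ℝ := max M 1 with hM'
  have hM'pos : (0:ℝ) < M' := lt_of_lt_of_le one_pos (le_max_right _ _)
  have hφpos' : ∀ x, Xs ≤ x → 0 < φ x := fun x hx =>
    hX₀ x (le_trans (le_trans (le_max_left _ _) (le_max_left _ _)) hx)
  have hstep : ∀ x, Xs ≤ x → q₁ ≤ φ (x + a₀ * φ x) / φ x ∧ φ (x + a₀ * φ x) / φ x ≤ q₂ := by
    intro x hx
    have hx2 : X₂ ≤ x := le_trans (le_trans (le_max_right _ _) (le_max_left _ _)) hx
    have := hX₂ x hx2 a₀ ⟨ha₀.le, le_refl a₀⟩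
    rw [Real.dist_eq, abs_lt] at this
    constructor
    · simp only [hq₁def]; simp only [hε] at this; linarith [this.1]
    · simp only [hq₂def]; simp only [hε] at this; linarith [this.2]
  have hMbound : ∀ x, Xs ≤ x → ∀ t ∈ Set.Icc a₀ B, h (x + t * φ x) - h x ≤ M' := by
    intro x hx t ht
    exact le_trans (hM x (le_trans (le_max_right _ _) hx) t ht) (le_max_left _ _)
  have hchain := chain_induction φ h a₀ B M' q₁ q₂ Xs ha₀ hq₁ hq₂pos hM'pos hBB
    hMbound hφpos' hstep
  -- constants
  have hlogq₁ : 0 < Real.log q₁ := Real.log_pos hq₁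
  refine ⟨M' * (1 / Real.log q₁ + 2), by positivity, Xs, max B (Real.exp 1), ?_, ?_⟩
  · have : (1:ℝ) < Real.exp 1 := by
      have := Real.exp_lt_exp (x := 0) (y := 1)
      rw [Real.exp_zero] at this
      exact this.2 one_pos
    exact lt_of_lt_of_le this (le_max_right _ _)
  intro x hx u hu
  have huB : B ≤ u := le_trans (le_max_left _ _) hu
  have hue : Real.exp 1 ≤ u := le_trans (le_max_right _ _) hu
  have hupos : 0 < u := lt_of_lt_of_le (Real.exp_pos 1) hue
  have hlogu : 1 ≤ Real.log u := by
    rw [Real.le_log_iff_exp_le hupos]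
    exact hue
  have hudiv : 1 ≤ u / B := (one_le_div hBpos).2 huB
  have hudivpos : 0 < u / B := by positivity
  set n : ℕ := ⌈Real.logb q₁ (u / B)⌉₊ with hn
  have hlogbnn : 0 ≤ Real.logb q₁ (u / B) := Real.logb_nonneg hq₁ hudiv
  have hun : u ≤ B * q₁ ^ n := by
    have h1 : Real.logb q₁ (u / B) ≤ (n : ℝ) := Nat.le_ceil _
    have h2 : q₁ ^ Real.logb q₁ (u / B) ≤ q₁ ^ (n : ℝ) :=
      (Real.rpow_le_rpow_left_iff hq₁).2 h1
    rw [Real.rpow_logb (by linarith) (ne_of_gt hq₁) hudivpos, Real.rpow_natCast] at h2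
    rw [div_le_iff₀ hBpos] at h2
    calc u ≤ q₁ ^ n * B := h2
      _ = B * q₁ ^ n := mul_comm _ _
  have ha₀B : a₀ ≤ B := by simp only [hBdef]; nlinarith
  have hbound := hchain n u (le_trans ha₀B huB) hun x hx
  have hnle : (n : ℝ) ≤ Real.logb q₁ (u / B) + 1 := (Nat.ceil_lt_add_one hlogbnn).le
  have hlog2 : Real.log (u / B) ≤ Real.log u :=
    Real.log_le_log (by positivity) (div_le_self hupos.le hB1)
  have hlogdiv : Real.logb q₁ (u / B) ≤ Real.log u / Real.log q₁ := by
    rw [Real.logb]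
    gcongr
  have e1 : (n:ℝ) + 1 ≤ Real.log u / Real.log q₁ + 2 := by linarith
  have e2 : Real.log u / Real.log q₁ + 2 ≤ (1 / Real.log q₁ + 2) * Real.log u := by
    have heq : Real.log u / Real.log q₁ = (1 / Real.log q₁) * Real.log u := by ring
    nlinarith [hlogu]
  have e3 := mul_le_mul_of_nonneg_right (e1.trans e2) hM'pos.le
  have heq2 : ((1 / Real.log q₁ + 2) * Real.log u) * M'
      = M' * (1 / Real.log q₁ + 2) * Real.log u := by ring
  linarith [hbound, e3, heq2.le, heq2.ge]
end
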